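/- arXiv:1104.1291 — 3 statements merged into one kernel-verified Lean document; each statement's English description precedes it below -/
import Mathlib

section
/- For all real numbers $b,c \ge 0$ and every even integer $q \ge 2$: $2(b^{q-1}-c^{q-1})(b-c) \ge (b-c)^2 (b^{q-2}+c^{q-2})$. -/
/-- Elementary polynomial inequality: for `b, c ≥ 0` and even `q ≥ 2`,
`2(b^{q-1} - c^{q-1})(b - c) ≥ (b - c)^2 (b^{q-2} + c^{q-2})`. -/
theorem poly_ineq_even (b c : ℝ) (hb : 0 ≤ b) (hc : 0 ≤ c)
    (q : ℕ) (hq : 2 ≤ q) (hqe : Even q) :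
    (b - c) ^ 2 * (b ^ (q - 2) + c ^ (q - 2))
      ≤ 2 * ((b ^ (q - 1) - c ^ (q - 1)) * (b - c)) := by
  obtain ⟨n, rfl⟩ : ∃ n, q = n + 2 := ⟨q - 2, by omega⟩
  have h1 : n + 2 - 2 = n := by omega
  have h2 : n + 2 - 1 = n + 1 := by omega
  rw [h1, h2]
  have key : 2 * ((b ^ (n + 1) - c ^ (n + 1)) * (b - c)) - (b - c) ^ 2 * (b ^ n + c ^ n)
      = (b - c) * (b + c) * (b ^ n - c ^ n) := by ring
  have hp : 0 ≤ (b - c) * (b + c) * (b ^ n - c ^ n) := by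
    rcases le_total b c with h | h
    · have h3 : b ^ n ≤ c ^ n := pow_le_pow_left₀ hb h n
      nlinarith [mul_nonpos_of_nonpos_of_nonneg (sub_nonpos.2 h) (add_nonneg hb hc)]
    · have h3 : c ^ n ≤ b ^ n := pow_le_pow_left₀ hc h n
      exact mul_nonneg (mul_nonneg (by linarith) (by linarith)) (by linarith)
  linarith [key, hp]
end

section
/- Energy estimate for the discrete Green's function: under the hypotheses of the definition of $G_T$ (uniformly elliptic conductivities $\alpha \le a \le \beta$ on $\mathbb{Z}^d$, $T>0$), the truncation $G_{T,M}:=\min\{G_T(\cdot,0),M\}$ satisfies $T^{-1}\sum_{x\in\mathbb{Z}^d} G_{T,M}(x)^2 + \alpha \sum_{x\in\mathbb{Z}^d}|\nabla G_{T,M}(x)|^2 \le M$, provided $G_T \ge 0$. -/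
lemma min_key (a b M : ℝ) :
    (min b M - min a M) ^ 2 ≤ (min b M - min a M) * (b - a) := by
  simp only [min_def]; split_ifs <;> nlinarith

lemma min_key2 (a b M : ℝ) :
    (min b M - min a M) * (b - a) ≤ (b - a) ^ 2 := by
  simp only [min_def]; split_ifs <;> nlinarith

lemma min_key3 (a b M : ℝ) : 0 ≤ (min b M - min a M) * (b - a) :=
  le_trans (sq_nonneg _) (min_key a b M)

/-- The `i`-th canonical unit vector of the lattice `ℤ^d`. -/
def unitv (d : ℕ) (i : Fin d) : Fin d → ℤ := fun j => if j = i then 1 else 0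

set_option maxHeartbeats 1000000 in
/-- Energy estimate for the truncated Green's function `G_{T,M} = min{G_T, M}`:
`T⁻¹ ∑ G_{T,M}² + α ∑ |∇G_{T,M}|² ≤ M`, provided `G_T ≥ 0`. -/
theorem truncated_green_energy_estimate (d : ℕ) (hd : 2 ≤ d) (α β T M : ℝ)
    (hα : 0 < α) (hαβ : α ≤ β) (hT : 0 < T) (hM : 0 < M)
    (a : (Fin d → ℤ) → Fin d → ℝ) (ha : ∀ x i, a x i ∈ Set.Icc α β)
    (G : (Fin d → ℤ) → ℝ) (hGL2 : Memℓp G 2) (hGnonneg : ∀ x, 0 ≤ G x)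
    (hG : ∀ ζ : (Fin d → ℤ) → ℝ, Memℓp ζ 2 →
      T⁻¹ * ∑' x : Fin d → ℤ, ζ x * G x
        + ∑' x : Fin d → ℤ, ∑ i : Fin d,
            (ζ (x + unitv d i) - ζ x) * (a x i * (G (x + unitv d i) - G x))
        = ζ 0) :
    T⁻¹ * ∑' x : Fin d → ℤ, (min (G x) M) ^ 2
      + α * ∑' x : Fin d → ℤ, ∑ i : Fin d,
          (min (G (x + unitv d i)) M - min (G x) M) ^ 2
      ≤ M := by
  set H : (Fin d → ℤ) → ℝ := fun x => min (G x) M with hH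
  -- basic facts
  have hHnonneg : ∀ x, 0 ≤ H x := fun x => le_min (hGnonneg x) hM.le
  have hHleG : ∀ x, H x ≤ G x := fun x => min_le_left _ _
  -- summability of G²
  have sG2 : Summable (fun x : Fin d → ℤ => G x ^ 2) := by
    have h := hGL2.summable (p := 2) (by norm_num)
    have e : ∀ x, ‖G x‖ ^ (2 : ENNReal).toReal = G x ^ 2 := by
      intro x
      rw [ENNReal.toReal_ofNat, Real.norm_eq_abs, show ((2:ℝ)) = ((2:ℕ):ℝ) by norm_num,
        Real.rpow_natCast, sq_abs]
    simpa [e] using h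
  have sG2' : ∀ i : Fin d, Summable (fun x : Fin d → ℤ => G (x + unitv d i) ^ 2) :=
    fun i => (Equiv.addRight (unitv d i)).summable_iff.mpr sG2
  -- summability of H², H·G
  have sH2 : Summable (fun x : Fin d → ℤ => H x ^ 2) := by
    refine Summable.of_nonneg_of_le (fun x => sq_nonneg _) (fun x => ?_) sG2
    exact pow_le_pow_left₀ (hHnonneg x) (hHleG x) 2
  -- H ∈ ℓ²
  have hHL2 : Memℓp H 2 := by
    apply memℓp_gen
    have e : ∀ x, ‖H x‖ ^ (2 : ENNReal).toReal = H x ^ 2 := by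
      intro x
      rw [ENNReal.toReal_ofNat, Real.norm_eq_abs, show ((2:ℝ)) = ((2:ℕ):ℝ) by norm_num,
        Real.rpow_natCast, sq_abs]
    simpa [e] using sH2
  have sHG : Summable (fun x : Fin d → ℤ => H x * G x) := by
    refine Summable.of_nonneg_of_le (fun x => mul_nonneg (hHnonneg x) (hGnonneg x))
      (fun x => ?_) sG2
    have := mul_le_mul_of_nonneg_right (hHleG x) (hGnonneg x)
    nlinarith [this]
  -- dominating function for gradient terms
  have sDom : Summable (fun x : Fin d → ℤ =>
      ∑ i : Fin d, (2 * G (x + unitv d i) ^ 2 + 2 * G x ^ 2)) := by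
    apply summable_sum
    intro i _
    exact ((sG2' i).mul_left 2).add (sG2.mul_left 2)
  have hsqdom : ∀ x (i : Fin d),
      (G (x + unitv d i) - G x) ^ 2 ≤ 2 * G (x + unitv d i) ^ 2 + 2 * G x ^ 2 := by
    intro x i; nlinarith [sq_nonneg (G (x + unitv d i) + G x)]
  -- summability of ∑ᵢ (∇H)²
  have sGrad2 : Summable (fun x : Fin d → ℤ =>
      ∑ i : Fin d, (H (x + unitv d i) - H x) ^ 2) := by
    refine Summable.of_nonneg_of_le
      (fun x => Finset.sum_nonneg fun i _ => sq_nonneg _) (fun x => ?_) sDom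
    refine Finset.sum_le_sum fun i _ => ?_
    calc (H (x + unitv d i) - H x) ^ 2
        ≤ (H (x + unitv d i) - H x) * (G (x + unitv d i) - G x) :=
          min_key (G x) (G (x + unitv d i)) M
      _ ≤ (G (x + unitv d i) - G x) ^ 2 := min_key2 (G x) (G (x + unitv d i)) M
      _ ≤ _ := hsqdom x i
  -- summability of ∑ᵢ (∇H)·(a∇G)
  have hterm_nonneg : ∀ x (i : Fin d),
      0 ≤ (H (x + unitv d i) - H x) * (a x i * (G (x + unitv d i) - G x)) := by
    intro x i
    have h0 := min_key3 (G x) (G (x + unitv d i)) M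
    have ha0 : 0 ≤ a x i := le_trans hα.le (ha x i).1
    calc (0:ℝ) ≤ a x i * ((H (x + unitv d i) - H x) * (G (x + unitv d i) - G x)) :=
          mul_nonneg ha0 h0
      _ = _ := by ring
  have sGradA : Summable (fun x : Fin d → ℤ =>
      ∑ i : Fin d, (H (x + unitv d i) - H x) * (a x i * (G (x + unitv d i) - G x))) := by
    refine Summable.of_nonneg_of_le
      (fun x => Finset.sum_nonneg fun i _ => hterm_nonneg x i) (fun x => ?_)
      (sDom.mul_left β)
    rw [Finset.mul_sum]
    refine Finset.sum_le_sum fun i _ => ?_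
    have h1 : (H (x + unitv d i) - H x) * (G (x + unitv d i) - G x)
        ≤ (G (x + unitv d i) - G x) ^ 2 := min_key2 (G x) (G (x + unitv d i)) M
    have h0 := min_key3 (G x) (G (x + unitv d i)) M
    have haub := (ha x i).2
    have ha0 : 0 ≤ a x i := le_trans hα.le (ha x i).1
    have hβ0 : 0 < β := lt_of_lt_of_le hα hαβ
    calc (H (x + unitv d i) - H x) * (a x i * (G (x + unitv d i) - G x))
        = a x i * ((H (x + unitv d i) - H x) * (G (x + unitv d i) - G x)) := by ring
      _ ≤ β * ((H (x + unitv d i) - H x) * (G (x + unitv d i) - G x)) :=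
          mul_le_mul_of_nonneg_right haub h0
      _ ≤ β * (G (x + unitv d i) - G x) ^ 2 := mul_le_mul_of_nonneg_left h1 hβ0.le
      _ ≤ β * (2 * G (x + unitv d i) ^ 2 + 2 * G x ^ 2) :=
          mul_le_mul_of_nonneg_left (hsqdom x i) hβ0.le
  -- the weak formulation with test function H
  have hEq := hG H hHL2
  have hH0 : H 0 ≤ M := min_le_right _ _
  -- first sum comparison
  have ineq1 : ∑' x : Fin d → ℤ, H x ^ 2 ≤ ∑' x : Fin d → ℤ, H x * G x := by
    refine Summable.tsum_le_tsum (fun x => ?_) sH2 sHG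
    have := mul_le_mul_of_nonneg_left (hHleG x) (hHnonneg x)
    nlinarith [this]
  -- second sum comparison
  have ineq2 : α * ∑' x : Fin d → ℤ, ∑ i : Fin d, (H (x + unitv d i) - H x) ^ 2
      ≤ ∑' x : Fin d → ℤ,
          ∑ i : Fin d, (H (x + unitv d i) - H x) * (a x i * (G (x + unitv d i) - G x)) := by
    rw [← tsum_mul_left]
    refine Summable.tsum_le_tsum (fun x => ?_) (sGrad2.mul_left α) sGradA
    rw [Finset.mul_sum]
    refine Finset.sum_le_sum fun i _ => ?_
    have h1 := min_key (G x) (G (x + unitv d i)) M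
    have halb := (ha x i).1
    have h0 := min_key3 (G x) (G (x + unitv d i)) M
    calc α * (H (x + unitv d i) - H x) ^ 2
        ≤ α * ((H (x + unitv d i) - H x) * (G (x + unitv d i) - G x)) :=
          mul_le_mul_of_nonneg_left h1 hα.le
      _ ≤ a x i * ((H (x + unitv d i) - H x) * (G (x + unitv d i) - G x)) :=
          mul_le_mul_of_nonneg_right halb h0
      _ = _ := by ring
  have hTinv : (0:ℝ) ≤ T⁻¹ := (inv_pos.mpr hT).le
  calc T⁻¹ * ∑' x : Fin d → ℤ, H x ^ 2
        + α * ∑' x : Fin d → ℤ, ∑ i : Fin d, (H (x + unitv d i) - H x) ^ 2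
      ≤ T⁻¹ * ∑' x : Fin d → ℤ, H x * G x
        + ∑' x : Fin d → ℤ,
            ∑ i : Fin d, (H (x + unitv d i) - H x) * (a x i * (G (x + unitv d i) - G x)) :=
        add_le_add (mul_le_mul_of_nonneg_left ineq1 hTinv) ineq2
    _ = H 0 := hEq
    _ ≤ M := hH0
end

section
/- Convolution decay lemma (case $d>2$): Let $d>2$ and let $h\in L^2_{loc}(\mathbb{Z}^d)$, $h\ge 0$, satisfy $\sum_{R<|z|\le 2R} h(z)^2 \lesssim R^{2-d}$ for all $R\gg 1$ and $\sum_{|z|\le R} h(z)^2 \lesssim 1$ for $R\sim 1$. Then for all $R\gg 1$: $\sum_{|x|\le R} \sum_{z\in\mathbb{Z}^d} h(z)\,h(z-x) \lesssim R^2$. -/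
noncomputable def znorm (d : ℕ) (x : Fin d → ℤ) : ℝ := ‖(fun i => (x i : ℝ) : Fin d → ℝ)‖

lemma znorm_eq (d : ℕ) (x : Fin d → ℤ) : znorm d x = ‖x‖ := by
  unfold znorm; rw [Pi.norm_def, Pi.norm_def]; norm_cast

lemma znorm_nonneg (d : ℕ) (x : Fin d → ℤ) : 0 ≤ znorm d x := by
  rw [znorm_eq]; exact norm_nonneg x

lemma znorm_sub_le (d : ℕ) (x y : Fin d → ℤ) : znorm d x - znorm d y ≤ znorm d (x - y) := by
  simp only [znorm_eq]; exact norm_sub_norm_le x y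

lemma znorm_sub_le' (d : ℕ) (x y : Fin d → ℤ) : znorm d (x - y) ≤ znorm d x + znorm d y := by
  simp only [znorm_eq]; exact norm_sub_le x y

lemma znorm_neg (d : ℕ) (x : Fin d → ℤ) : znorm d (-x) = znorm d x := by
  simp only [znorm_eq]; exact norm_neg x

lemma znorm_sub_comm (d : ℕ) (x y : Fin d → ℤ) : znorm d (x - y) = znorm d (y - x) := by
  simp only [znorm_eq]; exact norm_sub_rev x y

open Classical in
noncomputable def ballF (d : ℕ) (r : ℝ) : Finset (Fin d → ℤ) :=
  (Finset.Icc (fun _ => -⌈r⌉) (fun _ => ⌈r⌉)).filter (fun x => znorm d x ≤ r)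

lemma mem_ballF {d : ℕ} {r : ℝ} {x : Fin d → ℤ} : x ∈ ballF d r ↔ znorm d x ≤ r := by
  classical
  unfold ballF
  rw [Finset.mem_filter]
  constructor
  · exact fun h => h.2
  · intro hx
    refine ⟨?_, hx⟩
    rw [Finset.mem_Icc]
    have hnn : (0:ℝ) ≤ r := le_trans (znorm_nonneg d x) hx
    rw [znorm_eq] at hx
    constructor <;> intro i <;>
    · have h1 : |(x i : ℝ)| ≤ r := by
        have := (pi_norm_le_iff_of_nonneg hnn).1 hx i
        simpa [Int.norm_eq_abs] using this
      rw [abs_le] at h1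
      first
        | (have : (x i : ℝ) ≤ ⌈r⌉ := le_trans h1.2 (Int.le_ceil r); exact_mod_cast this)
        | (have : (-⌈r⌉ : ℝ) ≤ (x i : ℝ) := le_trans (by simpa using neg_le_neg (Int.le_ceil r)) h1.1; exact_mod_cast this)

lemma card_ballF_le {d : ℕ} {r : ℝ} (hr : 1 ≤ r) : ((ballF d r).card : ℝ) ≤ (5*r)^d := by
  classical
  have h0 : (0:ℝ) < r := lt_of_lt_of_le one_pos hr
  have h1 : (ballF d r).card ≤ (Finset.Icc (fun _ => -⌈r⌉ : Fin d → ℤ) (fun _ => ⌈r⌉)).card :=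
    Finset.card_filter_le _ _
  have h2 : ((Finset.Icc (fun _ => -⌈r⌉ : Fin d → ℤ) (fun _ => ⌈r⌉)).card : ℝ) ≤ (5*r)^d := by
    rw [Pi.card_Icc]
    push_cast
    rw [Finset.prod_const, Finset.card_univ, Fintype.card_fin]
    refine pow_le_pow_left₀ (by positivity) ?_ d
    rw [Int.card_Icc]
    have hc : (⌈r⌉ : ℝ) < r + 1 := Int.ceil_lt_add_one r
    have hnn : (0:ℤ) ≤ ⌈r⌉ + 1 - -⌈r⌉ := by
      have : (0:ℤ) ≤ ⌈r⌉ := Int.ceil_nonneg h0.le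
      omega
    have heq : ((⌈r⌉ + 1 - -⌈r⌉).toNat : ℝ) = ((⌈r⌉ + 1 - -⌈r⌉ : ℤ) : ℝ) := by
      exact_mod_cast congrArg (Int.cast : ℤ → ℝ) (Int.toNat_of_nonneg hnn)
    rw [heq]; push_cast; linarith
  calc ((ballF d r).card : ℝ) ≤ _ := by exact_mod_cast h1
    _ ≤ _ := h2

open Classical in
noncomputable def annF (d : ℕ) (r : ℝ) : Finset (Fin d → ℤ) :=
  (ballF d (2*r)).filter (fun x => r < znorm d x)

lemma mem_annF {d : ℕ} {r : ℝ} {x : Fin d → ℤ} :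
    x ∈ annF d r ↔ r < znorm d x ∧ znorm d x ≤ 2*r := by
  classical
  unfold annF
  rw [Finset.mem_filter, mem_ballF]
  tauto

/-- card of the set of `y` in any finset with `znorm (y - w) ≤ R` is at most `card (ballF R)`. -/
lemma card_near_le {d : ℕ} (t : Finset (Fin d → ℤ)) (w : Fin d → ℤ) (R : ℝ) :
    ((t.filter (fun y => znorm d (y - w) ≤ R)).card) ≤ (ballF d R).card := by
  classical
  apply Finset.card_le_card_of_injOn (fun y => y - w)
  · intro y hy
    rw [Finset.mem_coe, Finset.mem_filter] at hy
    exact mem_ballF.2 hy.2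
  · intro a _ b _ hab
    simpa using sub_left_injective hab

section H
variable {d : ℕ} (hd : 2 < d) {h : (Fin d → ℤ) → ℝ} (hpos : ∀ z, 0 ≤ h z)
  {C₀ R₀ : ℝ} (hC₀ : 0 < C₀) (hR₀ : 1 ≤ R₀)

lemma sum_ball_split (f : (Fin d → ℤ) → ℝ) (hf : ∀ z, 0 ≤ f z) (r : ℝ) :
    ∑ z ∈ ballF d (2*r), f z ≤ ∑ z ∈ ballF d r, f z + ∑ z ∈ annF d r, f z := by
  classical
  rw [← Finset.sum_filter_add_sum_filter_not (ballF d (2*r)) (fun z => znorm d z ≤ r)]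
  gcongr ?_ + ?_
  · apply Finset.sum_le_sum_of_subset_of_nonneg
    · intro z hz; rw [Finset.mem_filter] at hz; exact mem_ballF.2 hz.2
    · intro i _ _; exact hf i
  · apply Finset.sum_le_sum_of_subset_of_nonneg
    · intro z hz; rw [Finset.mem_filter, mem_ballF] at hz
      exact mem_annF.2 ⟨lt_of_not_ge hz.2, hz.1⟩
    · intro i _ _; exact hf i

include hd hR₀ in
lemma rho_decay (k : ℕ) : (R₀*2^k:ℝ) ^ (2-(d:ℝ)) ≤ (1/2:ℝ)^k := by
  have h2k : (1:ℝ) ≤ 2^k := one_le_pow₀ (by norm_num)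
  have hbase : (2:ℝ)^k ≤ R₀*2^k := le_mul_of_one_le_left (by positivity) hR₀
  have hexp : 2-(d:ℝ) ≤ 0 := by
    have : (2:ℝ) < d := by exact_mod_cast hd
    linarith
  have h1 : (R₀*2^k:ℝ) ^ (2-(d:ℝ)) ≤ ((2:ℝ)^k) ^ (2-(d:ℝ)) :=
    Real.rpow_le_rpow_of_nonpos (by positivity) hbase hexp
  have h2 : ((2:ℝ)^k) ^ (2-(d:ℝ)) ≤ (1/2:ℝ)^k := by
    rw [← Real.rpow_natCast (2:ℝ) k, ← Real.rpow_mul (by norm_num)]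
    have : ((1:ℝ)/2)^k = (2:ℝ) ^ (-(k:ℝ)) := by
      rw [Real.rpow_neg (by norm_num), Real.rpow_natCast, one_div, inv_pow]
    rw [this]
    apply Real.rpow_le_rpow_of_exponent_le (by norm_num)
    have hd' : (3:ℝ) ≤ (d:ℝ) := by exact_mod_cast hd
    nlinarith [Nat.cast_nonneg (α := ℝ) k]
  exact h1.trans h2

include hd hpos hC₀ hR₀ in
lemma ballSq (hannF : ∀ r : ℝ, R₀ ≤ r → ∑ z ∈ annF d r, h z^2 ≤ C₀ * r ^ (2 - (d:ℝ)))
    (hballF : ∑ z ∈ ballF d R₀, h z^2 ≤ C₀) :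
    ∀ k : ℕ, ∑ z ∈ ballF d (R₀ * 2^k), h z^2 ≤ 3*C₀ - 2*C₀*(1/2:ℝ)^k := by
  intro k
  induction k with
  | zero => simpa using by linarith
  | succ k ih =>
    have hrk : R₀ ≤ R₀ * 2^k := le_mul_of_one_le_right (by linarith) (one_le_pow₀ (by norm_num))
    have hsplit := sum_ball_split (f := fun z => h z^2) (fun z => sq_nonneg _) (R₀*2^k)
    have hann := hannF (R₀*2^k) hrk
    have hdec := rho_decay hd hR₀ k
    have h2r : (2:ℝ)*(R₀*2^k) = R₀*2^(k+1) := by ring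
    rw [h2r] at hsplit
    have : C₀ * (R₀*2^k) ^ (2-(d:ℝ)) ≤ C₀ * (1/2)^k :=
      mul_le_mul_of_nonneg_left hdec hC₀.le
    calc ∑ z ∈ ballF d (R₀*2^(k+1)), h z^2 ≤ _ := hsplit
      _ ≤ (3*C₀ - 2*C₀*(1/2:ℝ)^k) + C₀*(1/2)^k := by linarith
      _ ≤ 3*C₀ - 2*C₀*(1/2:ℝ)^(k+1) := by rw [pow_succ]; linarith [pow_nonneg (by norm_num : (0:ℝ) ≤ 1/2) k, hC₀.le]

include hd hpos hC₀ hR₀ in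
lemma summable_sq (hannF : ∀ r : ℝ, R₀ ≤ r → ∑ z ∈ annF d r, h z^2 ≤ C₀ * r ^ (2 - (d:ℝ)))
    (hballF : ∑ z ∈ ballF d R₀, h z^2 ≤ C₀) :
    Summable (fun z => h z^2) := by
  apply summable_of_sum_le (c := 3*C₀) (fun z => sq_nonneg _)
  intro u
  set B : ℕ := u.sup (fun z => ⌈znorm d z⌉₊) with hB
  have hsub : u ⊆ ballF d (R₀ * 2^B) := by
    intro z hz
    rw [mem_ballF]
    have h1 : znorm d z ≤ (⌈znorm d z⌉₊ : ℝ) := Nat.le_ceil _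
    have h2 : (⌈znorm d z⌉₊ : ℝ) ≤ (B:ℝ) := by
      exact_mod_cast Finset.le_sup (f := fun z => ⌈znorm d z⌉₊) hz
    have h3 : (B:ℝ) ≤ 2^B := by
      calc (B:ℝ) ≤ (2^B : ℕ) := by exact_mod_cast (Nat.lt_two_pow_self (n := B)).le
        _ = (2:ℝ)^B := by push_cast; ring
    have h4 : (2:ℝ)^B ≤ R₀*2^B := le_mul_of_one_le_left (by positivity) hR₀
    linarith
  calc ∑ z ∈ u, h z^2 ≤ ∑ z ∈ ballF d (R₀*2^B), h z^2 :=
        Finset.sum_le_sum_of_subset_of_nonneg hsub (fun i _ _ => sq_nonneg _)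
    _ ≤ 3*C₀ - 2*C₀*(1/2:ℝ)^B := ballSq hd hpos hC₀ hR₀ hannF hballF B
    _ ≤ 3*C₀ := by nlinarith [pow_nonneg (by norm_num : (0:ℝ) ≤ 1/2) B, hC₀.le]

include hd hpos hC₀ hR₀ in
lemma summable_mul (hannF : ∀ r : ℝ, R₀ ≤ r → ∑ z ∈ annF d r, h z^2 ≤ C₀ * r ^ (2 - (d:ℝ)))
    (hballF : ∑ z ∈ ballF d R₀, h z^2 ≤ C₀) (x : Fin d → ℤ) :
    Summable (fun z => h z * h (z - x)) := by
  have hsq := summable_sq hd hpos hC₀ hR₀ hannF hballF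
  have htr : Summable (fun z => h (z - x)^2) :=
    hsq.comp_injective (sub_left_injective (b := x))
  apply Summable.of_nonneg_of_le (fun z => mul_nonneg (hpos z) (hpos _))
    (fun z => ?_) (hsq.add htr)
  nlinarith [sq_nonneg (h z - h (z - x)), sq_nonneg (h z), sq_nonneg (h (z-x))]

include hd hpos hC₀ hR₀ in
lemma sumh_ann (hannF : ∀ r : ℝ, R₀ ≤ r → ∑ z ∈ annF d r, h z^2 ≤ C₀ * r ^ (2 - (d:ℝ)))
    {r : ℝ} (hr : R₀ ≤ r) :
    ∑ z ∈ annF d r, h z ≤ Real.sqrt ((10:ℝ)^d * C₀) * r := by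
  have hr1 : (1:ℝ) ≤ r := hR₀.trans hr
  have hr0 : (0:ℝ) < r := lt_of_lt_of_le one_pos hr1
  have hcs : (∑ z ∈ annF d r, h z)^2 ≤ ((annF d r).card : ℝ) * ∑ z ∈ annF d r, h z^2 := by
    have := Finset.sum_mul_sq_le_sq_mul_sq (annF d r) (fun _ => (1:ℝ)) h
    simpa [Finset.sum_const, nsmul_eq_mul] using this
  have hcard : ((annF d r).card : ℝ) ≤ (10*r)^d := by
    have h1 : (annF d r).card ≤ (ballF d (2*r)).card := Finset.card_filter_le _ _
    have h2 : ((ballF d (2*r)).card : ℝ) ≤ (5*(2*r))^d := card_ballF_le (by linarith)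
    calc ((annF d r).card:ℝ) ≤ ((ballF d (2*r)).card : ℝ) := by exact_mod_cast h1
      _ ≤ (5*(2*r))^d := h2
      _ = (10*r)^d := by ring_nf
  have hrd : (r:ℝ)^d * r ^ (2-(d:ℝ)) = r^2 := by
    rw [← Real.rpow_natCast r d, ← Real.rpow_add hr0]
    rw [show (d:ℝ) + (2 - (d:ℝ)) = 2 by ring]
    rw [show (2:ℝ) = ((2:ℕ):ℝ) by norm_num, Real.rpow_natCast]
  have hb : (∑ z ∈ annF d r, h z)^2 ≤ ((10:ℝ)^d * C₀) * r^2 := by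
    have hann := hannF r hr
    have hsum_nonneg : (0:ℝ) ≤ ∑ z ∈ annF d r, h z^2 :=
      Finset.sum_nonneg (fun i _ => sq_nonneg _)
    calc (∑ z ∈ annF d r, h z)^2 ≤ ((annF d r).card : ℝ) * ∑ z ∈ annF d r, h z^2 := hcs
      _ ≤ (10*r)^d * (C₀ * r ^ (2-(d:ℝ))) := by
          apply mul_le_mul hcard hann hsum_nonneg (by positivity)
      _ = ((10:ℝ)^d * C₀) * ((r:ℝ)^d * r ^ (2-(d:ℝ))) := by rw [mul_pow]; ring
      _ = ((10:ℝ)^d * C₀) * r^2 := by rw [hrd]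
  have hs0 : 0 ≤ ∑ z ∈ annF d r, h z := Finset.sum_nonneg (fun i _ => hpos i)
  have hrhs0 : 0 ≤ Real.sqrt ((10:ℝ)^d * C₀) * r := by positivity
  apply le_of_sq_le_sq ?_ hrhs0
  calc (∑ z ∈ annF d r, h z)^2 ≤ ((10:ℝ)^d * C₀) * r^2 := hb
    _ = (Real.sqrt ((10:ℝ)^d * C₀) * r)^2 := by
        rw [mul_pow, Real.sq_sqrt (by positivity)]


include hd hpos hC₀ hR₀ in
lemma sumh_ball (hannF : ∀ r : ℝ, R₀ ≤ r → ∑ z ∈ annF d r, h z^2 ≤ C₀ * r ^ (2 - (d:ℝ)))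
    (hballF : ∑ z ∈ ballF d R₀, h z^2 ≤ C₀) {r : ℝ} (hr : R₀ ≤ r) :
    ∑ z ∈ ballF d r, h z ≤ (Real.sqrt ((5*R₀)^d * C₀) + 4*Real.sqrt ((10:ℝ)^d*C₀)) * r := by
  set b₀ := Real.sqrt ((5*R₀)^d * C₀) with hb₀
  set b₁ := Real.sqrt ((10:ℝ)^d*C₀) with hb₁
  have hb₀0 : 0 ≤ b₀ := Real.sqrt_nonneg _
  have hb₁0 : 0 ≤ b₁ := Real.sqrt_nonneg _
  have hr1 : (1:ℝ) ≤ r := hR₀.trans hr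
  have hR₀0 : (0:ℝ) < R₀ := lt_of_lt_of_le one_pos hR₀
  -- base ball bound
  have hbase : ∑ z ∈ ballF d R₀, h z ≤ b₀ := by
    have hcs : (∑ z ∈ ballF d R₀, h z)^2 ≤ ((ballF d R₀).card : ℝ) * ∑ z ∈ ballF d R₀, h z^2 := by
      have := Finset.sum_mul_sq_le_sq_mul_sq (ballF d R₀) (fun _ => (1:ℝ)) h
      simpa [Finset.sum_const, nsmul_eq_mul] using this
    have hsq : (∑ z ∈ ballF d R₀, h z)^2 ≤ (5*R₀)^d * C₀ := by
      calc (∑ z ∈ ballF d R₀, h z)^2 ≤ _ := hcs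
        _ ≤ (5*R₀)^d * C₀ := by
            apply mul_le_mul (card_ballF_le hR₀) hballF
              (Finset.sum_nonneg fun i _ => sq_nonneg _) (by positivity)
    apply le_of_sq_le_sq ?_ hb₀0
    rw [hb₀, Real.sq_sqrt (by positivity)]
    exact hsq
  -- dyadic induction
  have hind : ∀ k : ℕ, ∑ z ∈ ballF d (R₀*2^k), h z ≤ b₀ + 2*b₁*(R₀*2^k) := by
    intro k
    induction k with
    | zero => simpa using by nlinarith
    | succ k ih =>
      have hrk : R₀ ≤ R₀ * 2^k := le_mul_of_one_le_right hR₀0.le (one_le_pow₀ (by norm_num))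
      have hsplit := sum_ball_split (f := h) hpos (R₀*2^k)
      have hann := sumh_ann hd hpos hC₀ hR₀ hannF hrk
      rw [show (2:ℝ)*(R₀*2^k) = R₀*2^(k+1) by ring] at hsplit
      calc ∑ z ∈ ballF d (R₀*2^(k+1)), h z ≤ _ := hsplit
        _ ≤ (b₀ + 2*b₁*(R₀*2^k)) + b₁*(R₀*2^k) := by linarith
        _ ≤ b₀ + 2*b₁*(R₀*2^(k+1)) := by rw [pow_succ]; nlinarith [pow_nonneg (by norm_num : (0:ℝ) ≤ 2) k]
  -- choose dyadic scale
  have hex : ∃ k : ℕ, r ≤ R₀ * 2^k := by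
    obtain ⟨n, hn⟩ := exists_nat_ge r
    refine ⟨n, hn.trans ?_⟩
    calc (n:ℝ) ≤ 2^n := by
          calc (n:ℝ) ≤ ((2^n : ℕ):ℝ) := by exact_mod_cast (Nat.lt_two_pow_self (n := n)).le
            _ = (2:ℝ)^n := by push_cast; ring
      _ ≤ R₀*2^n := le_mul_of_one_le_left (by positivity) hR₀
  classical
  set k₀ := Nat.find hex with hk₀
  have hspec : r ≤ R₀ * 2^k₀ := Nat.find_spec hex
  have hupper : R₀ * 2^k₀ ≤ 2*r := by
    rcases Nat.eq_zero_or_pos k₀ with h0 | hpos'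
    · rw [h0]; simpa using by linarith
    · obtain ⟨j, hj⟩ := Nat.exists_eq_succ_of_ne_zero hpos'.ne'
      have hnot : ¬ (r ≤ R₀ * 2^j) := Nat.find_min hex (by omega)
      push_neg at hnot
      rw [hj, pow_succ]
      nlinarith
  have hsub : ballF d r ⊆ ballF d (R₀*2^k₀) := by
    intro z hz; rw [mem_ballF] at *; linarith
  calc ∑ z ∈ ballF d r, h z ≤ ∑ z ∈ ballF d (R₀*2^k₀), h z :=
        Finset.sum_le_sum_of_subset_of_nonneg hsub (fun i _ _ => hpos i)
    _ ≤ b₀ + 2*b₁*(R₀*2^k₀) := hind k₀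
    _ ≤ b₀ + 4*b₁*r := by nlinarith
    _ ≤ (b₀ + 4*b₁)*r := by nlinarith


set_option maxHeartbeats 1000000 in
open Classical in
include hd hpos hC₀ hR₀ in
lemma shellQ (hannF : ∀ r : ℝ, R₀ ≤ r → ∑ z ∈ annF d r, h z^2 ≤ C₀ * r ^ (2 - (d:ℝ)))
    {R ρ : ℝ} (hR : R₀ ≤ R) (hρ : 4*R < ρ) :
    ∑ z ∈ (annF d (ρ/2)).filter (fun z => 4*R < znorm d z), h z * (∑ x ∈ ballF d R, h (z - x))
      ≤ (C₀ * 4^d) * ((ballF d R).card : ℝ) * ρ ^ (2-(d:ℝ)) := by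
  have hR1 : (1:ℝ) ≤ R := hR₀.trans hR
  have hR0 : (0:ℝ) < R := lt_of_lt_of_le one_pos hR1
  have hρ0 : (0:ℝ) < ρ := by linarith
  have hρ4 : R₀ ≤ ρ/4 := by linarith
  have hρ2 : R₀ ≤ ρ/2 := by linarith
  have hρ1 : R₀ ≤ ρ := by linarith
  set c : ℝ := 2 - (d:ℝ) with hc
  set FSF := (annF d (ρ/2)).filter (fun z => 4*R < znorm d z) with hFSF
  set AF := (ballF d (2*ρ)).filter (fun y => ρ/4 < znorm d y) with hAF
  set Tz : (Fin d → ℤ) → Finset (Fin d → ℤ) := fun z => AF.filter (fun y => znorm d (y - z) ≤ R) with hTz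
  set g : (Fin d → ℤ) → ℝ := fun z => ∑ y ∈ Tz z, h y with hg
  set NR := ((ballF d R).card : ℝ) with hNR
  have hNR0 : 0 ≤ NR := Nat.cast_nonneg _
  -- step 1 : pointwise domination of the inner convolution sum
  have step1 : ∀ z ∈ FSF, ∑ x ∈ ballF d R, h (z - x) ≤ g z := by
    intro z hz
    rw [hFSF, Finset.mem_filter, mem_annF] at hz
    obtain ⟨⟨hz1, hz2⟩, hz3⟩ := hz
    have hz2' : znorm d z ≤ ρ := by linarith
    have himg : ∑ x ∈ ballF d R, h (z - x) = ∑ y ∈ (ballF d R).image (fun x => z - x), h y := by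
      rw [Finset.sum_image]
      intro a _ b _ hab
      have := sub_right_injective hab
      exact this
    rw [himg]
    apply Finset.sum_le_sum_of_subset_of_nonneg ?_ (fun i _ _ => hpos i)
    intro y hy
    rw [Finset.mem_image] at hy
    obtain ⟨x, hx, rfl⟩ := hy
    rw [mem_ballF] at hx
    have hxnn : 0 ≤ znorm d x := znorm_nonneg d x
    have hy1 : znorm d z - znorm d x ≤ znorm d (z - x) := znorm_sub_le d z x
    have hy2 : znorm d (z - x) ≤ znorm d z + znorm d x := znorm_sub_le' d z x
    rw [hTz, Finset.mem_filter]
    refine ⟨?_, ?_⟩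
    · rw [hAF, Finset.mem_filter, mem_ballF]
      constructor
      · linarith
      · linarith
    · have : z - x - z = -x := by ring
      rw [this, znorm_neg]
      exact hx
  -- step 2
  have step2 : ∑ z ∈ FSF, h z * (∑ x ∈ ballF d R, h (z - x)) ≤ ∑ z ∈ FSF, h z * g z := by
    apply Finset.sum_le_sum
    intro z hz
    exact mul_le_mul_of_nonneg_left (step1 z hz) (hpos z)
  -- step 3 : Cauchy-Schwarz
  have step3 : (∑ z ∈ FSF, h z * g z)^2 ≤ (∑ z ∈ FSF, h z^2) * (∑ z ∈ FSF, g z^2) :=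
    Finset.sum_mul_sq_le_sq_mul_sq FSF h g
  -- step 4
  have step4 : ∑ z ∈ FSF, h z^2 ≤ C₀ * (ρ/2) ^ c := by
    calc ∑ z ∈ FSF, h z^2 ≤ ∑ z ∈ annF d (ρ/2), h z^2 :=
          Finset.sum_le_sum_of_subset_of_nonneg (Finset.filter_subset _ _) (fun i _ _ => sq_nonneg _)
      _ ≤ C₀ * (ρ/2) ^ c := hannF (ρ/2) hρ2
  -- step 5 : triple annulus bound
  have step5 : ∑ y ∈ AF, h y^2 ≤ C₀ * ((ρ/4)^c + (ρ/2)^c + ρ^c) := by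
    have hsplit1 := Finset.sum_filter_add_sum_filter_not AF (fun y => znorm d y ≤ ρ/2) (fun y => h y^2)
    have hsplit2 := Finset.sum_filter_add_sum_filter_not (AF.filter (fun y => ¬ znorm d y ≤ ρ/2))
        (fun y => znorm d y ≤ ρ) (fun y => h y^2)
    have hs1 : ∑ y ∈ AF.filter (fun y => znorm d y ≤ ρ/2), h y^2 ≤ C₀ * (ρ/4)^c := by
      refine le_trans (Finset.sum_le_sum_of_subset_of_nonneg ?_ (fun i _ _ => sq_nonneg _)) (hannF (ρ/4) hρ4)
      intro y hy
      rw [Finset.mem_filter, hAF, Finset.mem_filter] at hy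
      rw [mem_annF]
      exact ⟨hy.1.2, by linarith [hy.2]⟩
    have hs2 : ∑ y ∈ (AF.filter (fun y => ¬ znorm d y ≤ ρ/2)).filter (fun y => znorm d y ≤ ρ), h y^2
        ≤ C₀ * (ρ/2)^c := by
      refine le_trans (Finset.sum_le_sum_of_subset_of_nonneg ?_ (fun i _ _ => sq_nonneg _)) (hannF (ρ/2) hρ2)
      intro y hy
      rw [Finset.mem_filter, Finset.mem_filter] at hy
      rw [mem_annF]
      constructor
      · push_neg at hy; exact hy.1.2
      · linarith [hy.2]
    have hs3 : ∑ y ∈ (AF.filter (fun y => ¬ znorm d y ≤ ρ/2)).filter (fun y => ¬ znorm d y ≤ ρ), h y^2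
        ≤ C₀ * ρ^c := by
      refine le_trans (Finset.sum_le_sum_of_subset_of_nonneg ?_ (fun i _ _ => sq_nonneg _)) (hannF ρ hρ1)
      intro y hy
      rw [Finset.mem_filter, Finset.mem_filter, hAF, Finset.mem_filter, mem_ballF] at hy
      rw [mem_annF]
      constructor
      · push_neg at hy; exact hy.2
      · exact hy.1.1.1
    calc ∑ y ∈ AF, h y^2
        = ∑ y ∈ AF.filter (fun y => znorm d y ≤ ρ/2), h y^2
          + (∑ y ∈ (AF.filter (fun y => ¬ znorm d y ≤ ρ/2)).filter (fun y => znorm d y ≤ ρ), h y^2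
             + ∑ y ∈ (AF.filter (fun y => ¬ znorm d y ≤ ρ/2)).filter (fun y => ¬ znorm d y ≤ ρ), h y^2) := by
          rw [hsplit2, hsplit1]
      _ ≤ C₀*(ρ/4)^c + (C₀*(ρ/2)^c + C₀*ρ^c) := by gcongr ?_ + (?_ + ?_) <;> assumption
      _ = C₀ * ((ρ/4)^c + (ρ/2)^c + ρ^c) := by ring
  -- step 6 : double counting
  have step6 : ∑ z ∈ FSF, g z^2 ≤ NR^2 * ∑ y ∈ AF, h y^2 := by
    have hgz : ∀ z, g z^2 ≤ NR * ∑ y ∈ Tz z, h y^2 := by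
      intro z
      have hcs : (∑ y ∈ Tz z, h y)^2 ≤ ((Tz z).card : ℝ) * ∑ y ∈ Tz z, h y^2 := by
        have := Finset.sum_mul_sq_le_sq_mul_sq (Tz z) (fun _ => (1:ℝ)) h
        simpa [Finset.sum_const, nsmul_eq_mul] using this
      have hcard : ((Tz z).card : ℝ) ≤ NR := by
        rw [hNR, hTz]
        exact_mod_cast card_near_le AF z R
      calc g z^2 ≤ ((Tz z).card : ℝ) * ∑ y ∈ Tz z, h y^2 := hcs
        _ ≤ NR * ∑ y ∈ Tz z, h y^2 := by
            apply mul_le_mul_of_nonneg_right hcard (Finset.sum_nonneg fun i _ => sq_nonneg _)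
    have hswap : ∑ z ∈ FSF, ∑ y ∈ Tz z, h y^2 ≤ NR * ∑ y ∈ AF, h y^2 := by
      have h1 : ∀ z, ∑ y ∈ Tz z, h y^2 = ∑ y ∈ AF, (if znorm d (y - z) ≤ R then h y^2 else 0) := by
        intro z; rw [hTz]; simp [Finset.sum_filter]
      rw [Finset.sum_congr rfl (fun z _ => h1 z), Finset.sum_comm]
      have h2 : ∀ y, ∑ z ∈ FSF, (if znorm d (y - z) ≤ R then h y^2 else 0) ≤ NR * h y^2 := by
        intro y
        have : ∑ z ∈ FSF, (if znorm d (y - z) ≤ R then h y^2 else 0)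
            = ((FSF.filter (fun z => znorm d (y - z) ≤ R)).card : ℝ) * h y^2 := by
          rw [← Finset.sum_filter, Finset.sum_const, nsmul_eq_mul]
        rw [this]
        have hcard : ((FSF.filter (fun z => znorm d (y - z) ≤ R)).card : ℝ) ≤ NR := by
          have hrw : FSF.filter (fun z => znorm d (y - z) ≤ R)
              = FSF.filter (fun z => znorm d (z - y) ≤ R) := by
            apply Finset.filter_congr
            intro z _
            rw [znorm_sub_comm]
          rw [hrw, hNR]
          exact_mod_cast card_near_le FSF y R
        exact mul_le_mul_of_nonneg_right hcard (sq_nonneg _)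
      calc ∑ y ∈ AF, ∑ z ∈ FSF, (if znorm d (y - z) ≤ R then h y^2 else 0)
          ≤ ∑ y ∈ AF, NR * h y^2 := Finset.sum_le_sum (fun y _ => h2 y)
        _ = NR * ∑ y ∈ AF, h y^2 := by rw [Finset.mul_sum]
    calc ∑ z ∈ FSF, g z^2 ≤ ∑ z ∈ FSF, NR * ∑ y ∈ Tz z, h y^2 :=
          Finset.sum_le_sum (fun z _ => hgz z)
      _ = NR * ∑ z ∈ FSF, ∑ y ∈ Tz z, h y^2 := by rw [Finset.mul_sum]
      _ ≤ NR * (NR * ∑ y ∈ AF, h y^2) := by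
          apply mul_le_mul_of_nonneg_left hswap hNR0
      _ = NR^2 * ∑ y ∈ AF, h y^2 := by ring
  -- step 7 : rpow arithmetic
  have hPpos : (0:ℝ) < ρ^c := Real.rpow_pos_of_pos hρ0 c
  have hdiv : ∀ a : ℝ, 1 ≤ a → (ρ/a)^c ≤ a^d * ρ^c := by
    intro a ha
    have ha0 : (0:ℝ) < a := lt_of_lt_of_le one_pos ha
    rw [Real.div_rpow hρ0.le ha0.le, div_le_iff₀ (Real.rpow_pos_of_pos ha0 c)]
    have hkey : (1:ℝ) ≤ a^d * a^c := by
      have hc2 : (a:ℝ)^d * a^c = a^2 := by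
        rw [← Real.rpow_natCast a d, ← Real.rpow_add ha0,
          show ((d:ℝ) + c) = 2 by rw [hc]; ring,
          show (2:ℝ) = ((2:ℕ):ℝ) by norm_num, Real.rpow_natCast]
      rw [hc2]
      nlinarith
    nlinarith [hPpos.le]
  have h2d : (8:ℝ) ≤ 2^d := by
    calc (8:ℝ) = 2^3 := by norm_num
      _ ≤ 2^d := pow_le_pow_right₀ one_le_two (by omega)
  have h4eq : (4:ℝ)^d = 2^d * 2^d := by rw [← mul_pow]; norm_num
  have key : (3:ℝ)*2^d ≤ 4^d := by nlinarith [pow_pos (show (0:ℝ) < 2 by norm_num) d]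
  have h24 : (2:ℝ)^d ≤ 4^d := by nlinarith [pow_pos (show (0:ℝ) < 2 by norm_num) d]
  have h14 : (1:ℝ) ≤ 4^d := one_le_pow₀ (by norm_num)
  have hHA : ∑ y ∈ AF, h y^2 ≤ C₀ * (3*4^d) * ρ^c := by
    have d2 := hdiv 2 one_le_two
    have d4 := hdiv 4 (by norm_num)
    have e1 : (2:ℝ)^d * ρ^c ≤ 4^d * ρ^c := mul_le_mul_of_nonneg_right h24 hPpos.le
    have e2 : ρ^c ≤ 4^d * ρ^c := le_mul_of_one_le_left hPpos.le h14
    have e3 : (ρ/4)^c + (ρ/2)^c + ρ^c ≤ 3*(4^d*ρ^c) := by linarith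
    calc ∑ y ∈ AF, h y^2 ≤ C₀ * ((ρ/4)^c + (ρ/2)^c + ρ^c) := step5
      _ ≤ C₀ * (3*(4^d*ρ^c)) := mul_le_mul_of_nonneg_left e3 hC₀.le
      _ = C₀ * (3*4^d) * ρ^c := by ring
  have hS1' : ∑ z ∈ FSF, h z^2 ≤ C₀ * 2^d * ρ^c := by
    have d2 := hdiv 2 one_le_two
    calc ∑ z ∈ FSF, h z^2 ≤ C₀ * (ρ/2)^c := step4
      _ ≤ C₀ * (2^d * ρ^c) := mul_le_mul_of_nonneg_left d2 hC₀.le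
      _ = C₀ * 2^d * ρ^c := by ring
  have hS2 : ∑ z ∈ FSF, g z^2 ≤ NR^2 * (C₀ * (3*4^d) * ρ^c) :=
    step6.trans (mul_le_mul_of_nonneg_left hHA (by positivity))
  have hS2nn : (0:ℝ) ≤ ∑ z ∈ FSF, g z^2 := Finset.sum_nonneg fun i _ => sq_nonneg _
  have hRHS0 : (0:ℝ) ≤ (C₀ * 4^d) * NR * ρ^c := by positivity
  refine le_trans step2 (le_of_sq_le_sq ?_ hRHS0)
  calc (∑ z ∈ FSF, h z * g z)^2 ≤ (∑ z ∈ FSF, h z^2) * (∑ z ∈ FSF, g z^2) := step3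
    _ ≤ (C₀ * 2^d * ρ^c) * (NR^2 * (C₀ * (3*4^d) * ρ^c)) := by
        apply mul_le_mul hS1' hS2 hS2nn (by positivity)
    _ ≤ ((C₀ * 4^d) * NR * ρ^c)^2 := by
        have hfact : (0:ℝ) ≤ C₀^2*NR^2*(ρ^c)^2*4^d := by positivity
        nlinarith [mul_le_mul_of_nonneg_right key hfact]


open Classical in
omit hd hpos hC₀ in
include hR₀ in
/-- Covering of the far region by dyadic shells. -/
lemma farcover (f : (Fin d → ℤ) → ℝ) (hf : ∀ z, 0 ≤ f z) {R : ℝ} (hR : R₀ ≤ R) :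
    ∀ (K : ℕ) (u : Finset (Fin d → ℤ)), (∀ z ∈ u, 4*R < znorm d z) →
      (∀ z ∈ u, znorm d z ≤ R₀*2^K) →
      ∑ z ∈ u, f z ≤
        ∑ k ∈ Finset.range K, ∑ z ∈ (annF d (R₀*2^k)).filter (fun z => 4*R < znorm d z), f z := by
  intro K
  induction K with
  | zero =>
    intro u hu1 hu2
    have : u = ∅ := by
      apply Finset.eq_empty_of_forall_notMem
      intro z hz
      have h1 := hu1 z hz
      have h2 := hu2 z hz
      simp only [pow_zero, mul_one] at h2
      linarith [hR₀.trans hR]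
    simp [this]
  | succ K ih =>
    intro u hu1 hu2
    rw [← Finset.sum_filter_add_sum_filter_not u (fun z => znorm d z ≤ R₀*2^K)]
    rw [Finset.sum_range_succ]
    gcongr ?_ + ?_
    · apply ih
      · intro z hz; rw [Finset.mem_filter] at hz; exact hu1 z hz.1
      · intro z hz; rw [Finset.mem_filter] at hz; exact hz.2
    · apply Finset.sum_le_sum_of_subset_of_nonneg
      · intro z hz
        rw [Finset.mem_filter] at hz ⊢
        refine ⟨mem_annF.2 ⟨lt_of_not_ge hz.2, ?_⟩, hu1 z hz.1⟩
        have := hu2 z hz.1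
        calc znorm d z ≤ R₀*2^(K+1) := this
          _ = 2*(R₀*2^K) := by ring
      · intro i _ _; exact hf i

include hd in
lemma two_pow_rpow_le (j : ℕ) : ((2:ℝ)^j) ^ (2-(d:ℝ)) ≤ (1/2:ℝ)^j := by
  rw [← Real.rpow_natCast (2:ℝ) j, ← Real.rpow_mul (by norm_num)]
  have : ((1:ℝ)/2)^j = (2:ℝ) ^ (-(j:ℝ)) := by
    rw [Real.rpow_neg (by norm_num), Real.rpow_natCast, one_div, inv_pow]
  rw [this]
  apply Real.rpow_le_rpow_of_exponent_le (by norm_num)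
  have hd' : (3:ℝ) ≤ (d:ℝ) := by exact_mod_cast hd
  nlinarith [Nat.cast_nonneg (α := ℝ) j]

omit hd hpos hC₀ hR₀ in
lemma rpow_dd {r : ℝ} (hr : 0 < r) : (r:ℝ)^d * r ^ (2-(d:ℝ)) = r^2 := by
  rw [← Real.rpow_natCast r d, ← Real.rpow_add hr]
  rw [show (d:ℝ) + (2 - (d:ℝ)) = 2 by ring]
  rw [show (2:ℝ) = ((2:ℕ):ℝ) by norm_num, Real.rpow_natCast]

omit hd hpos hC₀ hR₀ in
lemma geo_tail_le (k₀ K : ℕ) :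
    ∑ k ∈ Finset.range K, (if k₀ ≤ k+1 then ((1:ℝ)/2)^(k+1-k₀) else 0) ≤ 2 := by
  classical
  rw [← Finset.sum_filter]
  have himg : ∑ k ∈ (Finset.range K).filter (fun k => k₀ ≤ k+1), ((1:ℝ)/2)^(k+1-k₀)
      = ∑ j ∈ ((Finset.range K).filter (fun k => k₀ ≤ k+1)).image (fun k => k+1-k₀), ((1:ℝ)/2)^j := by
    rw [Finset.sum_image]
    intro a ha b hb hab
    rw [Finset.mem_coe, Finset.mem_filter] at ha hb
    simp only at hab
    omega
  rw [himg]
  refine le_trans (Finset.sum_le_sum_of_subset_of_nonneg ?_ (fun i _ _ => by positivity)) (sum_geometric_two_le (K+1))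
  intro j hj
  rw [Finset.mem_image] at hj
  obtain ⟨k, hk, rfl⟩ := hj
  rw [Finset.mem_filter, Finset.mem_range] at hk
  rw [Finset.mem_range]
  omega

end H

lemma tsum_subtype_eq_sum {β : Type*} (f : β → ℝ) (s : Finset β) (p : β → Prop)
    (hp : ∀ x, p x ↔ x ∈ s) :
    ∑' (z : {z // p z}), f z.1 = ∑ z ∈ s, f z := by
  rw [← Finset.tsum_subtype s f]
  exact Equiv.tsum_eq (Equiv.subtypeEquivRight hp) (fun (x : {x // x ∈ s}) => f x.1)

set_option maxHeartbeats 2000000 in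
open Classical in
/-- Convolution decay lemma (case `d > 2`, Lemma 2.10 of Gloria–Otto): annular
`L²` bounds `∑_{R<|z|≤2R} h² ≲ R^{2-d}` and a near-origin bound imply
`∑_{|x|≤R} ∑_z h(z) h(z-x) ≲ R²` for all large `R`. -/
theorem convolution_decay (d : ℕ) (hd : 2 < d)
    (h : (Fin d → ℤ) → ℝ) (hpos : ∀ z, 0 ≤ h z)
    (C₀ R₀ : ℝ) (hC₀ : 0 < C₀) (hR₀ : 1 ≤ R₀)
    (hann : ∀ R : ℝ, R₀ ≤ R →
      ∑' z : {z : Fin d → ℤ // R < znorm d z ∧ znorm d z ≤ 2 * R}, h z.1 ^ 2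
        ≤ C₀ * R ^ (2 - (d : ℝ)))
    (hball : ∑' z : {z : Fin d → ℤ // znorm d z ≤ R₀}, h z.1 ^ 2 ≤ C₀) :
    ∃ C₁ > (0 : ℝ), ∀ R : ℝ, R₀ ≤ R →
      ∑' x : {x : Fin d → ℤ // znorm d x ≤ R},
          ∑' z : Fin d → ℤ, h z * h (z - x.1)
        ≤ C₁ * R ^ 2 := by
  classical
  -- Finset versions of the hypotheses
  have hannF : ∀ r : ℝ, R₀ ≤ r → ∑ z ∈ annF d r, h z^2 ≤ C₀ * r ^ (2 - (d:ℝ)) := by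
    intro r hr
    have he := tsum_subtype_eq_sum (fun z => h z^2) (annF d r)
      (fun z => r < znorm d z ∧ znorm d z ≤ 2*r) (fun z => (mem_annF (d := d)).symm)
    rw [← he]
    exact hann r hr
  have hballF : ∑ z ∈ ballF d R₀, h z^2 ≤ C₀ := by
    have he := tsum_subtype_eq_sum (fun z => h z^2) (ballF d R₀)
      (fun z => znorm d z ≤ R₀) (fun z => (mem_ballF (d := d)).symm)
    rw [← he]
    exact hball
  set c₁ := Real.sqrt ((5*R₀)^d * C₀) + 4*Real.sqrt ((10:ℝ)^d*C₀) with hc₁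
  have hc₁0 : 0 < c₁ := by
    have : 0 < Real.sqrt ((5*R₀)^d * C₀) := Real.sqrt_pos.2 (by positivity)
    have : 0 ≤ Real.sqrt ((10:ℝ)^d*C₀) := Real.sqrt_nonneg _
    rw [hc₁]; linarith
  refine ⟨25*c₁^2 + 2*C₀*4^d*5^d, by positivity, ?_⟩
  intro R hR
  have hR1 : (1:ℝ) ≤ R := hR₀.trans hR
  have hR0 : (0:ℝ) < R := lt_of_lt_of_le one_pos hR1
  set F : (Fin d → ℤ) → ℝ := fun z => ∑ x ∈ ballF d R, h z * h (z - x) with hF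
  have hsum_each : ∀ x ∈ ballF d R, Summable (fun z => h z * h (z - x)) :=
    fun x _ => summable_mul hd hpos hC₀ hR₀ hannF hballF x
  have hFs : Summable F := summable_sum hsum_each
  have hFnn : ∀ z, 0 ≤ F z := fun z => Finset.sum_nonneg fun x _ => mul_nonneg (hpos _) (hpos _)
  -- convert outer tsum to a finset sum and swap
  have hstep1 : ∑' x : {x : Fin d → ℤ // znorm d x ≤ R}, ∑' z : Fin d → ℤ, h z * h (z - x.1)
      = ∑' z, F z := by
    have he := tsum_subtype_eq_sum (fun x => ∑' z, h z * h (z - x)) (ballF d R)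
      (fun x => znorm d x ≤ R) (fun x => (mem_ballF (d := d)).symm)
    calc ∑' x : {x : Fin d → ℤ // znorm d x ≤ R}, ∑' z : Fin d → ℤ, h z * h (z - x.1)
        = ∑ x ∈ ballF d R, ∑' z, h z * h (z - x) := he
      _ = ∑' z, F z := (Summable.tsum_finsetSum hsum_each).symm
  -- split into near and far parts
  set near : Set (Fin d → ℤ) := {z | znorm d z ≤ 4*R} with hnear
  have hsplit : ∑' (z : near), F ↑z + ∑' (z : ↑nearᶜ), F ↑z = ∑' z, F z :=
    Summable.tsum_add_tsum_compl (hFs.subtype _) (hFs.subtype _)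
  -- near part
  have hnear_eq : ∑' (z : near), F ↑z = ∑ z ∈ ballF d (4*R), F z := by
    exact tsum_subtype_eq_sum F (ballF d (4*R)) (fun z => z ∈ near)
      (fun z => by rw [hnear]; simp only [Set.mem_setOf_eq]; exact (mem_ballF (d := d)).symm)
  have hS5 : ∑ z ∈ ballF d (5*R), h z ≤ c₁*(5*R) := by
    rw [hc₁]; exact sumh_ball hd hpos hC₀ hR₀ hannF hballF (by linarith)
  have hnearb : ∑ z ∈ ballF d (4*R), F z ≤ 25*c₁^2*R^2 := by
    have hinner : ∀ z ∈ ballF d (4*R), ∑ x ∈ ballF d R, h (z - x) ≤ ∑ y ∈ ballF d (5*R), h y := by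
      intro z hz
      rw [mem_ballF] at hz
      have himg : ∑ x ∈ ballF d R, h (z - x) = ∑ y ∈ (ballF d R).image (fun x => z - x), h y := by
        rw [Finset.sum_image]
        intro a _ b _ hab
        exact sub_right_injective hab
      rw [himg]
      apply Finset.sum_le_sum_of_subset_of_nonneg ?_ (fun i _ _ => hpos i)
      intro y hy
      rw [Finset.mem_image] at hy
      obtain ⟨x, hx, rfl⟩ := hy
      rw [mem_ballF] at hx ⊢
      have := znorm_sub_le' d z x
      linarith
    have hzb : ∀ z ∈ ballF d (4*R), F z ≤ h z * (c₁*(5*R)) := by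
      intro z hz
      rw [hF]
      calc ∑ x ∈ ballF d R, h z * h (z - x) = h z * ∑ x ∈ ballF d R, h (z - x) := by
            rw [Finset.mul_sum]
        _ ≤ h z * (c₁*(5*R)) :=
            mul_le_mul_of_nonneg_left ((hinner z hz).trans hS5) (hpos z)
    have hball4 : ∑ z ∈ ballF d (4*R), h z ≤ c₁*(5*R) := by
      refine le_trans (Finset.sum_le_sum_of_subset_of_nonneg ?_ (fun i _ _ => hpos i)) hS5
      intro z hz; rw [mem_ballF] at hz ⊢; linarith
    calc ∑ z ∈ ballF d (4*R), F z ≤ ∑ z ∈ ballF d (4*R), h z * (c₁*(5*R)) :=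
          Finset.sum_le_sum hzb
      _ = (∑ z ∈ ballF d (4*R), h z) * (c₁*(5*R)) := by rw [Finset.sum_mul]
      _ ≤ (c₁*(5*R)) * (c₁*(5*R)) := by
          apply mul_le_mul_of_nonneg_right hball4 (by positivity)
      _ = 25*c₁^2*R^2 := by ring
  -- far part
  set NR := ((ballF d R).card : ℝ) with hNR
  have hNR0 : (0:ℝ) ≤ NR := Nat.cast_nonneg _
  have hex : ∃ k : ℕ, 4*R < R₀*2^k := by
    obtain ⟨n, hn⟩ := exists_nat_gt (4*R)
    refine ⟨n, lt_of_lt_of_le hn ?_⟩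
    calc (n:ℝ) ≤ 2^n := by
          calc (n:ℝ) ≤ ((2^n : ℕ):ℝ) := by exact_mod_cast (Nat.lt_two_pow_self (n := n)).le
            _ = (2:ℝ)^n := by push_cast; ring
      _ ≤ R₀*2^n := le_mul_of_one_le_left (by positivity) hR₀
  set k₀ := Nat.find hex with hk₀
  have hk₀spec : 4*R < R₀*2^k₀ := Nat.find_spec hex
  have hc0 : 2-(d:ℝ) ≤ 0 := by
    have : (2:ℝ) < d := by exact_mod_cast hd
    linarith
  have h4Rc : (0:ℝ) ≤ (4*R) ^ (2-(d:ℝ)) := (Real.rpow_pos_of_pos (by linarith) _).le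
  have hfar : ∑' (z : ↑nearᶜ), F ↑z ≤ 2*((C₀*4^d) * NR * (4*R) ^ (2-(d:ℝ))) := by
    apply Summable.tsum_le_of_sum_le (hFs.subtype _)
    intro u
    set u' := u.image Subtype.val with hu'
    have hval : ∑ a ∈ u, F a.1 = ∑ z ∈ u', F z := by
      rw [hu', Finset.sum_image]
      intro a _ b _ hab
      exact Subtype.val_injective hab
    have hu1 : ∀ z ∈ u', 4*R < znorm d z := by
      intro z hz
      rw [hu', Finset.mem_image] at hz
      obtain ⟨a, _, rfl⟩ := hz
      exact lt_of_not_ge a.2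
    set B : ℕ := u'.sup (fun z => ⌈znorm d z⌉₊) with hB
    have hu2 : ∀ z ∈ u', znorm d z ≤ R₀*2^B := by
      intro z hz
      have h1 : znorm d z ≤ (⌈znorm d z⌉₊ : ℝ) := Nat.le_ceil _
      have h2 : (⌈znorm d z⌉₊ : ℝ) ≤ (B:ℝ) := by
        exact_mod_cast Finset.le_sup (f := fun z => ⌈znorm d z⌉₊) hz
      have h3 : (B:ℝ) ≤ 2^B := by
        calc (B:ℝ) ≤ ((2^B : ℕ):ℝ) := by exact_mod_cast (Nat.lt_two_pow_self (n := B)).le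
          _ = (2:ℝ)^B := by push_cast; ring
      have h4 : (2:ℝ)^B ≤ R₀*2^B := le_mul_of_one_le_left (by positivity) hR₀
      linarith
    have hcover := farcover hR₀ F hFnn hR B u' hu1 hu2
    have hper : ∀ k ∈ Finset.range B,
        ∑ z ∈ (annF d (R₀*2^k)).filter (fun z => 4*R < znorm d z), F z
          ≤ (C₀*4^d) * NR * (4*R) ^ (2-(d:ℝ)) * (if k₀ ≤ k+1 then ((1:ℝ)/2)^(k+1-k₀) else 0) := by
      intro k _
      by_cases hcase : 4*R < R₀*2^(k+1)
      · have hk₀le : k₀ ≤ k+1 := Nat.find_min' hex hcase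
        rw [if_pos hk₀le]
        have hQ := shellQ hd hpos hC₀ hR₀ hannF hR hcase
        have hdiv2 : annF d (R₀*2^(k+1)/2) = annF d (R₀*2^k) := by
          congr 1
          ring
        rw [hdiv2] at hQ
        have hFrw : ∑ z ∈ (annF d (R₀*2^k)).filter (fun z => 4*R < znorm d z), F z
            = ∑ z ∈ (annF d (R₀*2^k)).filter (fun z => 4*R < znorm d z),
                h z * (∑ x ∈ ballF d R, h (z - x)) := by
          apply Finset.sum_congr rfl
          intro z _
          rw [hF, Finset.mul_sum]
        rw [hFrw]
        refine hQ.trans ?_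
        -- (R₀*2^(k+1))^(2-d) ≤ (4R)^(2-d) * (1/2)^(k+1-k₀)
        have hkey : (R₀*2^(k+1)) ^ (2-(d:ℝ)) ≤ (4*R) ^ (2-(d:ℝ)) * ((1:ℝ)/2)^(k+1-k₀) := by
          have hsplitk : R₀*2^(k+1) = (R₀*2^k₀) * 2^(k+1-k₀) := by
            rw [mul_assoc, ← pow_add]
            congr 2
            omega
          rw [hsplitk, Real.mul_rpow (by positivity) (by positivity)]
          apply mul_le_mul ?_ ?_ (by positivity) h4Rc
          · exact Real.rpow_le_rpow_of_nonpos (by linarith) hk₀spec.le hc0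
          · exact two_pow_rpow_le hd (k+1-k₀)
        calc (C₀*4^d) * NR * (R₀*2^(k+1)) ^ (2-(d:ℝ))
            ≤ (C₀*4^d) * NR * ((4*R) ^ (2-(d:ℝ)) * ((1:ℝ)/2)^(k+1-k₀)) := by
              apply mul_le_mul_of_nonneg_left hkey (by positivity)
          _ = (C₀*4^d) * NR * (4*R) ^ (2-(d:ℝ)) * ((1:ℝ)/2)^(k+1-k₀) := by ring
      · have hempty : (annF d (R₀*2^k)).filter (fun z => 4*R < znorm d z) = ∅ := by
          apply Finset.filter_false_of_mem
          intro z hz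
          rw [mem_annF] at hz
          push_neg at hcase
          intro hcon
          have h2 : znorm d z ≤ 2*(R₀*2^k) := hz.2
          have h3 : (2:ℝ)*(R₀*2^k) = R₀*2^(k+1) := by ring
          linarith
        rw [hempty]
        simp only [Finset.sum_empty]
        positivity
    calc ∑ a ∈ u, F a.1 = ∑ z ∈ u', F z := hval
      _ ≤ ∑ k ∈ Finset.range B,
            ∑ z ∈ (annF d (R₀*2^k)).filter (fun z => 4*R < znorm d z), F z := hcover
      _ ≤ ∑ k ∈ Finset.range B,
            (C₀*4^d) * NR * (4*R) ^ (2-(d:ℝ)) * (if k₀ ≤ k+1 then ((1:ℝ)/2)^(k+1-k₀) else 0) :=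
          Finset.sum_le_sum hper
      _ = (C₀*4^d) * NR * (4*R) ^ (2-(d:ℝ))
            * ∑ k ∈ Finset.range B, (if k₀ ≤ k+1 then ((1:ℝ)/2)^(k+1-k₀) else 0) := by
          rw [Finset.mul_sum]
      _ ≤ (C₀*4^d) * NR * (4*R) ^ (2-(d:ℝ)) * 2 := by
          apply mul_le_mul_of_nonneg_left (geo_tail_le k₀ B) (by positivity)
      _ = 2*((C₀*4^d) * NR * (4*R) ^ (2-(d:ℝ))) := by ring
  -- combine
  have hfar2 : 2*((C₀*4^d) * NR * (4*R) ^ (2-(d:ℝ))) ≤ 2*C₀*4^d*5^d*R^2 := by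
    have h1 : NR ≤ (5*R)^d := by rw [hNR]; exact card_ballF_le hR1
    have h2 : (4*R) ^ (2-(d:ℝ)) ≤ R ^ (2-(d:ℝ)) :=
      Real.rpow_le_rpow_of_nonpos hR0 (by linarith) hc0
    have h3 : NR * (4*R) ^ (2-(d:ℝ)) ≤ (5*R)^d * R ^ (2-(d:ℝ)) :=
      mul_le_mul h1 h2 h4Rc (by positivity)
    have h4 : (5*R:ℝ)^d * R ^ (2-(d:ℝ)) = 5^d * R^2 := by
      rw [mul_pow, mul_assoc, rpow_dd (d := d) hR0]
    have h5 : NR * (4*R) ^ (2-(d:ℝ)) ≤ 5^d * R^2 := h4 ▸ h3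
    calc 2*((C₀*4^d) * NR * (4*R) ^ (2-(d:ℝ)))
        = 2*C₀*4^d * (NR * (4*R) ^ (2-(d:ℝ))) := by ring
      _ ≤ 2*C₀*4^d * (5^d * R^2) := by
          apply mul_le_mul_of_nonneg_left h5 (by positivity)
      _ = 2*C₀*4^d*5^d*R^2 := by ring
  rw [hstep1, ← hsplit, hnear_eq]
  have hfarnn : (0:ℝ) ≤ ∑' (z : ↑nearᶜ), F ↑z := tsum_nonneg (fun z => hFnn z)
  nlinarith [hnearb, hfar.trans hfar2]
end
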